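/- Let Δ : ℕ → ℕ → ℝ be a function satisfying: (i) Δ(3,n) ≤ n - 3 for all n ≥ 3; (ii) Δ(d,n) ≤ Δ(d-1,n-1) whenever d ≤ n < 2d and d ≥ 4; (iii) the Kalai–Kleitman inequality Δ(d,n) ≤ Δ(d-1,n-1) + 2·Δ(d,⌊n/2⌋) + 2 whenever ⌊n/2⌋ ≥ d ≥ 2; and (iv) Δ is nonnegative. Then for any real parameters α, k > 1 with 1/α + 1/2^(k-1) ≤ 1, we have Δ(d,n) ≤ α^(d-3) · (n-d)^k for all n ≥ d ≥ 3. -/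

import Mathlib

lemma rpow_superadd {x y p : ℝ} (hx : 0 ≤ x) (hy : 0 ≤ y) (hp : 1 ≤ p) :
    x ^ p + y ^ p ≤ (x + y) ^ p := by
  lift x to NNReal using hx
  lift y to NNReal using hy
  exact_mod_cast NNReal.add_rpow_le_rpow_add x y hp

lemma key_arith (α A M T P : ℝ) (hα : 1 < α) (hA : 1 ≤ A) (hM : 0 ≤ M)
    (hT : 0 ≤ T) (hP : 0 < P) (h1 : T * P ≤ M - 2 * P) (h2 : P + 2 * α ≤ α * P) :
    A * M + 2 * (α * A * T) + 2 ≤ α * A * M := by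
  have hA0 : 0 ≤ A := by linarith
  have hαA : 1 ≤ α * A := by nlinarith
  rw [← mul_le_mul_iff_right₀ hP]
  have f1 := mul_le_mul_of_nonneg_left h2 (mul_nonneg hA0 hM)
  have f2 := mul_le_mul_of_nonneg_left h1 (by positivity : (0:ℝ) ≤ α * A)
  have f3 := mul_le_mul_of_nonneg_left hαA hP.le
  nlinarith [f1, f2, f3]

theorem tail_bound_unified (Δ : ℕ → ℕ → ℝ)
    (h3 : ∀ n : ℕ, 3 ≤ n → Δ 3 n ≤ (n : ℝ) - 3)
    (hlow : ∀ d n : ℕ, 4 ≤ d → d ≤ n → n < 2 * d → Δ d n ≤ Δ (d - 1) (n - 1))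
    (hKK : ∀ d n : ℕ, 2 ≤ d → d ≤ n / 2 →
      Δ d n ≤ Δ (d - 1) (n - 1) + 2 * Δ d (n / 2) + 2)
    (hpos : ∀ d n : ℕ, 0 ≤ Δ d n)
    (α k : ℝ) (hα : 1 < α) (hk : 1 < k)
    (hcond : 1 / α + 1 / (2 : ℝ) ^ (k - 1) ≤ 1) :
    ∀ d n : ℕ, 3 ≤ d → d ≤ n → Δ d n ≤ α ^ (d - 3) * ((n : ℝ) - d) ^ k := by
  have hk0 : (0:ℝ) ≤ k := by linarith
  have hα0 : (0:ℝ) < α := by linarith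
  have hP : (0:ℝ) < (2:ℝ) ^ k := Real.rpow_pos_of_pos (by norm_num) k
  have h2k : (2:ℝ) ≤ (2:ℝ) ^ k := by
    have := Real.rpow_le_rpow_of_exponent_le (by norm_num : (1:ℝ) ≤ 2) hk.le
    rwa [Real.rpow_one] at this
  -- condition rewritten: 2^k + 2*α ≤ α*2^k
  have hcond' : (2:ℝ) ^ k + 2 * α ≤ α * (2:ℝ) ^ k := by
    have hsub : (2:ℝ) ^ (k - 1) = (2:ℝ) ^ k / 2 := by
      rw [Real.rpow_sub (by norm_num), Real.rpow_one]
    rw [hsub] at hcond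
    have := mul_le_mul_of_nonneg_right hcond (le_of_lt (mul_pos hα0 hP))
    have hαne : α ≠ 0 := ne_of_gt hα0
    have hPne : ((2:ℝ)^k) ≠ 0 := ne_of_gt hP
    field_simp at this
    nlinarith [this]
  intro d n hd
  revert n
  induction d, hd using Nat.le_induction with
  | base =>
    intro n hn
    have hx0 : (0:ℝ) ≤ (n:ℝ) - 3 := by
      have : (3:ℝ) ≤ n := by exact_mod_cast hn
      linarith
    simp only [Nat.sub_self, pow_zero, one_mul, Nat.cast_ofNat]
    rcases eq_or_lt_of_le hn with h | h
    · have hn3 : n = 3 := h.symm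
      subst hn3
      have := h3 3 le_rfl
      norm_num at this ⊢
      rw [show ((3:ℕ):ℝ) - 3 = 0 by norm_num] at *
      rw [Real.zero_rpow (by linarith : k ≠ 0)]
      simpa using this
    · have hn4 : (4:ℝ) ≤ n := by exact_mod_cast h
      calc Δ 3 n ≤ (n:ℝ) - 3 := h3 n hn
        _ = ((n:ℝ) - 3) ^ (1:ℝ) := (Real.rpow_one _).symm
        _ ≤ ((n:ℝ) - 3) ^ k :=
            Real.rpow_le_rpow_of_exponent_le (by linarith) hk.le
  | succ d hd IH =>
    intro n
    induction n using Nat.strong_induction_on with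
    | _ n IHn =>
    intro hdn
    have hexp : d + 1 - 3 = (d - 3) + 1 := by omega
    have hA : (1:ℝ) ≤ α ^ (d - 3) := one_le_pow₀ hα.le
    have hd3 : (3:ℝ) ≤ (d:ℝ) := by exact_mod_cast hd
    rw [hexp, pow_succ]
    have hcast1 : ((n - 1 : ℕ) : ℝ) = (n:ℝ) - 1 := by
      rw [Nat.cast_sub (by omega)]; norm_num
    by_cases hcase : n < 2 * (d + 1)
    · -- low facet count case
      have h1 := hlow (d + 1) n (by omega) hdn hcase
      simp only [Nat.add_sub_cancel] at h1
      have h2 := IH (n - 1) (by omega)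
      rw [hcast1] at h2
      have hX0 : (0:ℝ) ≤ (n:ℝ) - 1 - d := by
        have : ((d:ℝ) + 1) ≤ n := by exact_mod_cast hdn
        linarith
      have hXk : (0:ℝ) ≤ ((n:ℝ) - 1 - d) ^ k := Real.rpow_nonneg hX0 k
      have : ((n:ℝ) - ((d:ℕ)+1:ℕ)) = (n:ℝ) - 1 - d := by push_cast; ring
      calc Δ (d + 1) n ≤ Δ d (n - 1) := h1
        _ ≤ α ^ (d - 3) * ((n:ℝ) - 1 - d) ^ k := h2
        _ ≤ α ^ (d - 3) * α * ((n:ℝ) - 1 - d) ^ k :=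
            mul_le_mul_of_nonneg_right
              (le_mul_of_one_le_right (by positivity) hα.le) hXk
        _ = α ^ (d - 3) * α * ((n:ℝ) - ((d:ℕ)+1:ℕ)) ^ k := by rw [this]
    · -- Kalai–Kleitman case
      push_neg at hcase
      have hhalf : d + 1 ≤ n / 2 := by omega
      have hKK' := hKK (d + 1) n (by omega) hhalf
      simp only [Nat.add_sub_cancel] at hKK'
      have h2 := IH (n - 1) (by omega)
      rw [hcast1] at h2
      have h3' := IHn (n / 2) (by omega) hhalf
      rw [hexp, pow_succ] at h3'
      set m : ℝ := (n:ℝ) - (d + 1) with hm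
      set t : ℝ := ((n / 2 : ℕ) : ℝ) - (d + 1) with ht
      have hcastn : 2 * ((d:ℝ) + 1) ≤ (n:ℝ) := by exact_mod_cast hcase
      have hm4 : (4:ℝ) ≤ m := by simp only [hm]; linarith
      have ht0 : (0:ℝ) ≤ t := by
        have : ((d:ℝ) + 1) ≤ ((n / 2 : ℕ) : ℝ) := by exact_mod_cast hhalf
        simp only [ht]; linarith
      have htle : t ≤ m / 2 - 2 := by
        have hfl : ((n / 2 : ℕ) : ℝ) ≤ (n:ℝ) / 2 := Nat.cast_div_le
        simp only [ht, hm]; linarith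
      -- m^k, t^k bounds
      have hM0 : (0:ℝ) ≤ m ^ k := Real.rpow_nonneg (by linarith) k
      have hT1 : t ^ k ≤ (m / 2 - 2) ^ k :=
        Real.rpow_le_rpow ht0 htle hk0
      have hT2 : (m / 2 - 2) ^ k + (2:ℝ) ^ k ≤ (m / 2) ^ k := by
        have := rpow_superadd (x := m / 2 - 2) (y := 2) (by linarith) (by norm_num) hk.le
        rwa [show m / 2 - 2 + 2 = m / 2 by ring] at this
      have hdivk : (m / 2) ^ k = m ^ k / (2:ℝ) ^ k :=
        Real.div_rpow (by linarith) (by norm_num : (0:ℝ) ≤ 2) k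
      have hdm : m ^ k = (m / 2) ^ k * (2:ℝ) ^ k := by
        rw [hdivk, div_mul_cancel₀ _ (ne_of_gt hP)]
      have h1key : t ^ k * (2:ℝ) ^ k ≤ m ^ k - 2 * (2:ℝ) ^ k := by
        have htk : t ^ k ≤ (m / 2) ^ k - (2:ℝ) ^ k := by linarith
        nlinarith [mul_le_mul_of_nonneg_right htk hP.le]
      have hkey := key_arith α (α ^ (d - 3)) (m ^ k) (t ^ k) ((2:ℝ) ^ k)
        hα hA hM0 (Real.rpow_nonneg ht0 k) hP h1key hcond'
      have hgoalcast : ((n:ℝ) - ((d:ℕ)+1:ℕ)) = m := by simp only [hm]; push_cast; ring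
      have h2' : Δ d (n - 1) ≤ α ^ (d - 3) * m ^ k := by
        have : (n:ℝ) - 1 - d = m := by simp only [hm]; ring
        rwa [this] at h2
      have h3'' : Δ (d + 1) (n / 2) ≤ α ^ (d - 3) * α * t ^ k := by
        have : (((n / 2 : ℕ) : ℝ) - ((d:ℕ)+1:ℕ)) = t := by simp only [ht]; push_cast; ring
        rwa [this] at h3'
      rw [mul_comm (α ^ (d - 3)) α] at h3''
      calc Δ (d + 1) n ≤ Δ d (n - 1) + 2 * Δ (d + 1) (n / 2) + 2 := hKK'
        _ ≤ α ^ (d - 3) * m ^ k + 2 * (α * α ^ (d - 3) * t ^ k) + 2 := by linarith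
        _ ≤ α * α ^ (d - 3) * m ^ k := hkey
        _ = α ^ (d - 3) * α * ((n:ℝ) - ((d:ℕ)+1:ℕ)) ^ k := by rw [hgoalcast]; ring
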